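/- Fix a positive integer n. There exists a constant C = C(n) > 0 such that for every d ∈ {1,2}, every nonnegative half-integer Q, and every s ∈ ℂ with |Re(s)| ≤ n satisfying Q ≥ 3n + 2 or |Im(s)| ≥ 1, one has |Γ((d/2)(Q + 1/2 − s))| ≤ C · |Q + 1 + s + 2n|^{nd+2} · |Γ((d/2)(Q + 1/2 + s))|. (Under the stated hypotheses neither (d/2)(Q + 1/2 − s) nor (d/2)(Q + 1/2 + s) is a nonpositive integer, so both Gamma values are finite and the right-hand Gamma value is nonzero.) -/

import Mathlib

open Complex Finset

set_option maxHeartbeats 1000000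

/-- Gamma shift identity. -/
lemma my_gamma_shift (z : ℂ) (m : ℕ) (h : ∀ j < m, z + j ≠ 0) :
    Complex.Gamma (z + m) = Complex.Gamma z * ∏ j ∈ Finset.range m, (z + j) := by
  induction m with
  | zero => simp
  | succ m ih =>
    have h' : ∀ j < m, z + j ≠ 0 := fun j hj => h j (hj.trans m.lt_succ_self)
    have hzm : z + m ≠ 0 := h m m.lt_succ_self
    have hcast : z + ((m : ℂ) + 1) = (z + m) + 1 := by ring
    push_cast
    rw [hcast, Complex.Gamma_add_one _ hzm, ih h', Finset.prod_range_succ]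
    ring

/-- `‖Γ‖` is monotone along horizontal rays with real part `≥ 2`. -/
lemma my_gamma_mono (u : ℂ) (hu : 2 ≤ u.re) (τ : ℝ) (hτ : 0 ≤ τ) :
    ‖Complex.Gamma u‖ ≤ ‖Complex.Gamma (u + τ)‖ := by
  rcases eq_or_lt_of_le hτ with rfl | hτ'
  · simp
  have hur : 0 < u.re := by linarith
  have hτre : 0 < ((τ : ℂ)).re := by simpa using hτ'
  set g : ℝ → ℝ := fun x => x ^ (u.re - 1) * (1 - x) ^ (τ - 1) with hg
  have haeIoo : ∀ᵐ (x : ℝ), x ∈ Set.uIoc (0:ℝ) 1 → x ∈ Set.Ioo (0:ℝ) 1 := by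
    have h1 : ∀ᵐ (x : ℝ), x ≠ 1 := by
      refine MeasureTheory.ae_iff.mpr ?_
      simpa using Real.volume_singleton (a := 1)
    filter_upwards [h1] with x hx hmem
    rw [Set.uIoc_of_le (by norm_num : (0:ℝ) ≤ 1)] at hmem
    exact ⟨hmem.1, lt_of_le_of_ne hmem.2 hx⟩
  have hIoo : ∀ x ∈ Set.Ioo (0:ℝ) 1,
      ‖(x : ℂ) ^ (u - 1) * ((1 : ℂ) - x) ^ ((τ : ℂ) - 1)‖ = g x := by
    intro x hx
    have hx0 : 0 < x := hx.1
    have hx1 : 0 < 1 - x := by linarith [hx.2]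
    rw [norm_mul]
    rw [Complex.norm_cpow_eq_rpow_re_of_pos hx0]
    have h1x : ((1 : ℂ) - x) = ((1 - x : ℝ) : ℂ) := by push_cast; ring
    rw [h1x, Complex.norm_cpow_eq_rpow_re_of_pos hx1]
    simp [hg, Complex.sub_re]
  have hbeta_real : Complex.betaIntegral (u.re : ℂ) (τ : ℂ)
      = ((∫ x in (0:ℝ)..1, g x : ℝ) : ℂ) := by
    rw [Complex.betaIntegral, ← intervalIntegral.integral_ofReal]
    apply intervalIntegral.integral_congr_ae
    filter_upwards [haeIoo] with x hx hmem
    have hx' := hx hmem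
    have hx0 : 0 < x := hx'.1
    have hx1 : 0 < 1 - x := by linarith [hx'.2]
    have h1x : ((1 : ℂ) - x) = ((1 - x : ℝ) : ℂ) := by push_cast; ring
    rw [h1x]
    rw [show ((u.re : ℂ) - 1) = ((u.re - 1 : ℝ) : ℂ) by push_cast; ring,
        show ((τ : ℂ) - 1) = ((τ - 1 : ℝ) : ℂ) by push_cast; ring,
        ← Complex.ofReal_cpow hx0.le, ← Complex.ofReal_cpow hx1.le,
        ← Complex.ofReal_mul]
  have hnorm_beta : ‖Complex.betaIntegral u (τ : ℂ)‖ ≤ ∫ x in (0:ℝ)..1, g x := by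
    rw [Complex.betaIntegral]
    refine le_trans (intervalIntegral.norm_integral_le_integral_norm (by norm_num)) ?_
    refine le_of_eq (intervalIntegral.integral_congr_ae ?_)
    filter_upwards [haeIoo] with x hx hmem
    exact hIoo x (hx hmem)
  have hid : Complex.Gamma u * Complex.Gamma (τ : ℂ) =
      Complex.Gamma (u + τ) * Complex.betaIntegral u (τ : ℂ) :=
    Complex.Gamma_mul_Gamma_eq_betaIntegral hur hτre
  have hid_real : Real.Gamma u.re * Real.Gamma τ =
      Real.Gamma (u.re + τ) * ∫ x in (0:ℝ)..1, g x := by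
    have h := Complex.Gamma_mul_Gamma_eq_betaIntegral
      (s := (u.re : ℂ)) (t := (τ : ℂ)) (by simpa using hur) hτre
    rw [hbeta_real] at h
    rw [show ((u.re : ℂ) + τ) = ((u.re + τ : ℝ) : ℂ) by push_cast; ring] at h
    rw [Complex.Gamma_ofReal, Complex.Gamma_ofReal, Complex.Gamma_ofReal] at h
    exact_mod_cast h
  have hGτ : 0 < Real.Gamma τ := Real.Gamma_pos_of_pos hτ'
  have hGuτ : 0 < Real.Gamma (u.re + τ) := Real.Gamma_pos_of_pos (by linarith)
  have hmono : Real.Gamma u.re ≤ Real.Gamma (u.re + τ) :=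
    (Real.Gamma_strictMonoOn_Ici.monotoneOn) (by simpa using hu)
      (by simp only [Set.mem_Ici]; linarith) (by linarith)
  have hbeta_val : ∫ x in (0:ℝ)..1, g x
      = Real.Gamma u.re * Real.Gamma τ / Real.Gamma (u.re + τ) := by
    field_simp at hid_real ⊢
    linarith [hid_real]
  have hGτc : Complex.Gamma (τ : ℂ) = ((Real.Gamma τ : ℝ) : ℂ) := Complex.Gamma_ofReal τ
  have key : ‖Complex.Gamma u‖ * Real.Gamma τ ≤
      ‖Complex.Gamma (u + τ)‖ * (Real.Gamma u.re * Real.Gamma τ / Real.Gamma (u.re + τ)) :=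
    calc ‖Complex.Gamma u‖ * Real.Gamma τ
        = ‖Complex.Gamma u * Complex.Gamma (τ : ℂ)‖ := by
          rw [norm_mul, hGτc, Complex.norm_real, Real.norm_eq_abs, abs_of_pos hGτ]
      _ = ‖Complex.Gamma (u + τ)‖ * ‖Complex.betaIntegral u (τ : ℂ)‖ := by
          rw [hid, norm_mul]
      _ ≤ _ := by
          rw [← hbeta_val]
          exact mul_le_mul_of_nonneg_left hnorm_beta (norm_nonneg _)
  have hfrac : Real.Gamma u.re * Real.Gamma τ / Real.Gamma (u.re + τ) ≤ Real.Gamma τ := by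
    rw [div_le_iff₀ hGuτ]
    nlinarith [hGτ.le, hmono]
  nlinarith [key, norm_nonneg (Complex.Gamma (u + τ)), hGτ,
    mul_le_mul_of_nonneg_left hfrac (norm_nonneg (Complex.Gamma (u + τ)))]

/-- Uniform bound for the ratio of Gamma factors on the strip
`|Re s| ≤ n`, provided `Q ≥ 3n+2` or `|Im s| ≥ 1`. -/
theorem stmt_2 (n : ℕ) (hn : 0 < n) :
    ∃ C : ℝ, 0 < C ∧
      ∀ (d : ℕ), (d = 1 ∨ d = 2) →
      ∀ (Q : ℝ), (∃ m : ℕ, Q = m / 2) →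
      ∀ s : ℂ, |s.re| ≤ (n : ℝ) →
        (3 * (n : ℝ) + 2 ≤ Q ∨ 1 ≤ |s.im|) →
        ‖Complex.Gamma ((d : ℂ) / 2 * ((Q : ℂ) + 1/2 - s))‖ ≤
          C * ‖(Q : ℂ) + 1 + s + 2 * (n : ℂ)‖ ^ (n * d + 2) *
            ‖Complex.Gamma ((d : ℂ) / 2 * ((Q : ℂ) + 1/2 + s))‖ := by
  refine ⟨(4*(n:ℝ)+5)^(4*n+3), by positivity, ?_⟩
  rintro d hd Q hQhalf s hs hQs
  obtain ⟨M, hM⟩ := hQhalf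
  have hQ0 : (0:ℝ) ≤ Q := by rw [hM]; positivity
  have hn1 : (1:ℝ) ≤ (n:ℝ) := by exact_mod_cast hn
  have hd1 : (1:ℝ) ≤ (d:ℝ) := by rcases hd with rfl|rfl <;> norm_num
  have hd2 : (d:ℝ) ≤ 2 := by rcases hd with rfl|rfl <;> norm_num
  have hsre := abs_le.mp hs
  set t : ℝ := (d:ℝ) * s.re with ht
  set w : ℂ := (d:ℂ)/2 * ((Q:ℂ) + 1/2 - s) with hwdef
  set b : ℂ := (d:ℂ)/2 * ((Q:ℂ) + 1/2 + s) with hbdef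
  set v : ℂ := w + (t:ℂ) with hvdef
  have hdc : (d:ℂ)/2 = (((d:ℝ)/2 : ℝ) : ℂ) := by push_cast; ring
  have hwre : w.re = (d:ℝ)/2 * (Q + 1/2 - s.re) := by
    rw [hwdef, hdc, Complex.re_ofReal_mul]
    norm_num [Complex.sub_re, Complex.add_re]
  have hwim : w.im = (d:ℝ)/2 * (-s.im) := by
    rw [hwdef, hdc, Complex.im_ofReal_mul]
    norm_num [Complex.sub_im, Complex.add_im]
  have hbre : b.re = (d:ℝ)/2 * (Q + 1/2 + s.re) := by
    rw [hbdef, hdc, Complex.re_ofReal_mul]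
    norm_num [Complex.add_re]
  have hbim : b.im = (d:ℝ)/2 * s.im := by
    rw [hbdef, hdc, Complex.im_ofReal_mul]
    norm_num [Complex.add_im]
  have hvre : v.re = (d:ℝ)/2 * (Q + 1/2 + s.re) := by
    rw [hvdef]
    simp only [Complex.add_re, Complex.ofReal_re, hwre, ht]
    ring
  have hvim : v.im = (d:ℝ)/2 * (-s.im) := by
    rw [hvdef]
    simp only [Complex.add_im, Complex.ofReal_im, hwim]
    ring
  have hvconj : v = (starRingEnd ℂ) b := by
    apply Complex.ext
    · rw [Complex.conj_re, hvre, hbre]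
    · rw [Complex.conj_im, hvim, hbim]; ring
  have hGbv : ‖Complex.Gamma b‖ = ‖Complex.Gamma v‖ := by
    rw [hvconj, Complex.Gamma_conj]
    exact (RCLike.norm_conj _).symm
  -- lower bounds on the shifted norms
  have hwre_half : 3*(n:ℝ)+2 ≤ Q → (1/2:ℝ) ≤ w.re := by
    intro hQ; rw [hwre]
    have hX : 2*(n:ℝ)+5/2 ≤ Q+1/2-s.re := by linarith [hsre.2]
    nlinarith [mul_le_mul_of_nonneg_left hX (by linarith : (0:ℝ) ≤ (d:ℝ)/2)]
  have hvre_half : 3*(n:ℝ)+2 ≤ Q → (1/2:ℝ) ≤ v.re := by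
    intro hQ; rw [hvre]
    have hX : 2*(n:ℝ)+5/2 ≤ Q+1/2+s.re := by linarith [hsre.1]
    nlinarith [mul_le_mul_of_nonneg_left hX (by linarith : (0:ℝ) ≤ (d:ℝ)/2)]
  have hlow : ∀ z : ℂ, ((3*(n:ℝ)+2 ≤ Q) → (1/2:ℝ) ≤ z.re) → z.im = (d:ℝ)/2 * (-s.im) →
      ∀ j : ℕ, (1/2:ℝ) ≤ ‖z + j‖ := by
    intro z hzre hzim j
    rcases hQs with hQ | him
    · have h1 : (1/2:ℝ) ≤ (z + j).re := by
        simp only [Complex.add_re, Complex.natCast_re]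
        have h2 : (0:ℝ) ≤ (j:ℝ) := Nat.cast_nonneg j
        linarith [hzre hQ]
      calc (1/2:ℝ) ≤ (z+j).re := h1
        _ ≤ ‖z+j‖ := Complex.re_le_norm _
        _ = ‖z+j‖ := rfl
    · have h1 : (1/2:ℝ) ≤ |(z + j).im| := by
        simp only [Complex.add_im, Complex.natCast_im, add_zero, hzim]
        rw [abs_mul, abs_neg, _root_.abs_of_nonneg (by linarith : (0:ℝ) ≤ (d:ℝ)/2)]
        nlinarith [him]
      calc (1/2:ℝ) ≤ |(z+j).im| := h1
        _ ≤ ‖z+j‖ := Complex.abs_im_le_norm _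
        _ = ‖z+j‖ := rfl
  have hlw : ∀ j : ℕ, (1/2:ℝ) ≤ ‖w + j‖ := hlow w hwre_half hwim
  have hlv : ∀ j : ℕ, (1/2:ℝ) ≤ ‖v + j‖ := hlow v hvre_half hvim
  have hnew : ∀ z : ℂ, ∀ j : ℕ, (1/2:ℝ) ≤ ‖z + (j:ℂ)‖ → z + (j:ℂ) ≠ 0 := by
    intro z j h h0
    rw [h0] at h; simp at h; linarith
  have hwre_low : -(n:ℝ) ≤ w.re := by
    rw [hwre]
    rcases le_or_gt 0 (Q + 1/2 - s.re) with h | h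
    · nlinarith [mul_nonneg (by linarith : (0:ℝ) ≤ (d:ℝ)/2) h]
    · have h1 := mul_le_mul_of_nonpos_right (show (d:ℝ)/2 ≤ 1 by linarith) h.le
      nlinarith [hsre.2]
  obtain ⟨k, hk⟩ : ∃ k : ℕ, k = 2*n+3 := ⟨_, rfl⟩
  obtain ⟨m, hm⟩ : ∃ m : ℕ, m = n*d := ⟨_, rfl⟩
  rw [show n*d+2 = m+2 by rw [hm]]
  have hkR : ((k:ℝ)) = 2*(n:ℝ)+3 := by rw [hk]; push_cast; ring
  have hmR : ((m:ℝ)) = (n:ℝ)*(d:ℝ) := by rw [hm]; push_cast; ring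
  have hτ : 0 ≤ t + (m:ℝ) := by
    have h1 : (0:ℝ) ≤ (d:ℝ) * (s.re + n) := mul_nonneg (by linarith) (by linarith [hsre.1])
    rw [hmR, ht]; nlinarith [h1]
  have hwk_re : 2 ≤ (w + (k:ℂ)).re := by
    have h1 : (w + (k:ℂ)).re = w.re + (k:ℝ) := by simp
    rw [h1, hkR]; linarith [hwre_low]
  have heq : (w + (k:ℂ)) + ((t + (m:ℝ) : ℝ) : ℂ) = v + ((k+m : ℕ):ℂ) := by
    rw [hvdef]; push_cast; ring
  have hA := my_gamma_shift w k (fun j _ => hnew w j (hlw j))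
  have hB := my_gamma_shift v (k+m) (fun j _ => hnew v j (hlv j))
  have hchain : ‖Complex.Gamma w‖ * ∏ j ∈ range k, ‖w + (j:ℂ)‖ ≤
      ‖Complex.Gamma v‖ * ∏ j ∈ range (k+m), ‖v + (j:ℂ)‖ := by
    have h1 : ‖Complex.Gamma (w + (k:ℂ))‖ ≤ ‖Complex.Gamma (v + ((k+m:ℕ):ℂ))‖ := by
      have h2 := my_gamma_mono (w + (k:ℂ)) hwk_re (t + (m:ℝ)) hτ
      rwa [heq] at h2
    calc ‖Complex.Gamma w‖ * ∏ j ∈ range k, ‖w + (j:ℂ)‖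
        = ‖Complex.Gamma (w + (k:ℂ))‖ := by rw [hA, norm_mul, norm_prod]
      _ ≤ ‖Complex.Gamma (v + ((k+m:ℕ):ℂ))‖ := h1
      _ = ‖Complex.Gamma v‖ * ∏ j ∈ range (k+m), ‖v + (j:ℂ)‖ := by
          rw [hB, norm_mul, norm_prod]
  have habs_t : |t| ≤ 2*(n:ℝ) := by
    rw [ht, abs_mul, Nat.abs_cast]
    nlinarith [mul_le_mul hd2 hs (abs_nonneg s.re) (by linarith : (0:ℝ) ≤ 2)]
  have hP2 : ∏ j ∈ range k, ‖v + (j:ℂ)‖ ≤ (1+4*(n:ℝ))^k * ∏ j ∈ range k, ‖w + (j:ℂ)‖ := by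
    calc ∏ j ∈ range k, ‖v + (j:ℂ)‖
        ≤ ∏ j ∈ range k, ((1+4*(n:ℝ)) * ‖w + (j:ℂ)‖) := by
          refine Finset.prod_le_prod (fun j _ => norm_nonneg _) ?_
          intro j _
          have h1 : ‖v + (j:ℂ)‖ ≤ ‖w + (j:ℂ)‖ + |t| := by
            have h2 : v + (j:ℂ) = (w + (j:ℂ)) + (t:ℂ) := by rw [hvdef]; ring
            rw [h2]
            calc ‖(w + (j:ℂ)) + (t:ℂ)‖ ≤ ‖w+(j:ℂ)‖ + ‖(t:ℂ)‖ := norm_add_le _ _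
              _ = ‖w+(j:ℂ)‖ + |t| := by rw [Complex.norm_real, Real.norm_eq_abs]
          nlinarith [hlw j, habs_t,
            mul_le_mul_of_nonneg_left (hlw j) (by positivity : (0:ℝ) ≤ 4*(n:ℝ))]
      _ = (1+4*(n:ℝ))^k * ∏ j ∈ range k, ‖w + (j:ℂ)‖ := by
          rw [Finset.prod_mul_distrib, Finset.prod_const, Finset.card_range]
  have hP3 : ∏ j ∈ range m, ‖v + ((k+j:ℕ):ℂ)‖ ≤ (‖v‖ + ((k+m:ℕ):ℝ))^m := by
    calc ∏ j ∈ range m, ‖v + ((k+j:ℕ):ℂ)‖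
        ≤ ∏ _j ∈ range m, (‖v‖ + ((k+m:ℕ):ℝ)) := by
          refine Finset.prod_le_prod (fun j _ => norm_nonneg _) ?_
          intro j hj
          have hj' : k + j ≤ k + m := by
            have := Finset.mem_range.mp hj; omega
          calc ‖v + ((k+j:ℕ):ℂ)‖ ≤ ‖v‖ + ‖(((k+j:ℕ)):ℂ)‖ := norm_add_le _ _
            _ = ‖v‖ + ((k+j:ℕ):ℝ) := by rw [Complex.norm_natCast]
            _ ≤ ‖v‖ + ((k+m:ℕ):ℝ) := by
                have : ((k+j:ℕ):ℝ) ≤ ((k+m:ℕ):ℝ) := by exact_mod_cast hj'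
                linarith
      _ = (‖v‖ + ((k+m:ℕ):ℝ))^m := by rw [Finset.prod_const, Finset.card_range]
  have hPw_pos : 0 < ∏ j ∈ range k, ‖w + (j:ℂ)‖ :=
    Finset.prod_pos (fun j _ => lt_of_lt_of_le (by norm_num) (hlw j))
  have hmain : ‖Complex.Gamma w‖ ≤
      ‖Complex.Gamma v‖ * ((1+4*(n:ℝ))^k * (‖v‖ + ((k+m:ℕ):ℝ))^m) := by
    have hb_nonneg : (0:ℝ) ≤ (1+4*(n:ℝ))^k * ∏ j ∈ range k, ‖w + (j:ℂ)‖ :=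
      mul_nonneg (pow_nonneg (by positivity) k)
        (Finset.prod_nonneg fun j _ => norm_nonneg _)
    have hc_nonneg : (0:ℝ) ≤ ∏ j ∈ range m, ‖v + ((k+j:ℕ):ℂ)‖ :=
      Finset.prod_nonneg fun j _ => norm_nonneg _
    have h2 : ∏ j ∈ range (k+m), ‖v + (j:ℂ)‖ ≤
        ((1+4*(n:ℝ))^k * ∏ j ∈ range k, ‖w + (j:ℂ)‖) * (‖v‖ + ((k+m:ℕ):ℝ))^m := by
      rw [Finset.prod_range_add]
      exact mul_le_mul hP2 hP3 hc_nonneg hb_nonneg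
    have h3 := hchain.trans (mul_le_mul_of_nonneg_left h2 (norm_nonneg _))
    refine le_of_mul_le_mul_right ?_ hPw_pos
    calc ‖Complex.Gamma w‖ * ∏ j ∈ range k, ‖w + (j:ℂ)‖
        ≤ ‖Complex.Gamma v‖ * (((1+4*(n:ℝ))^k * ∏ j ∈ range k, ‖w + (j:ℂ)‖) *
            (‖v‖ + ((k+m:ℕ):ℝ))^m) := h3
      _ = (‖Complex.Gamma v‖ * ((1+4*(n:ℝ))^k * (‖v‖ + ((k+m:ℕ):ℝ))^m)) *
            ∏ j ∈ range k, ‖w + (j:ℂ)‖ := by ring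
  set P : ℝ := ‖(Q:ℂ) + 1 + s + 2*(n:ℂ)‖ with hP
  have hPre : Q + 1 + s.re + 2*(n:ℝ) ≤ P := by
    have h1 : ((Q:ℂ) + 1 + s + 2*(n:ℂ)).re = Q + 1 + s.re + 2*(n:ℝ) := by simp
    rw [hP, ← h1]
    exact Complex.re_le_norm _
  have hP1 : 1 ≤ P := by linarith [hPre, hsre.1, hQ0, hn1]
  have hPim : |s.im| ≤ P := by
    have h1 : ((Q:ℂ) + 1 + s + 2*(n:ℂ)).im = s.im := by simp
    rw [hP, ← h1]
    exact Complex.abs_im_le_norm _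
  have hvnorm : ‖v‖ ≤ Q + 1/2 + (n:ℝ) + |s.im| := by
    have h1 := Complex.norm_le_abs_re_add_abs_im v
    have hhalf : |(d:ℝ)/2| ≤ 1 := by
      rw [_root_.abs_of_nonneg (by linarith : (0:ℝ) ≤ (d:ℝ)/2)]; linarith
    have h2 : |v.re| ≤ Q + 1/2 + (n:ℝ) := by
      rw [hvre, abs_mul]
      have h4 : |Q + 1/2 + s.re| ≤ Q + 1/2 + (n:ℝ) :=
        abs_le.mpr ⟨by linarith [hsre.1], by linarith [hsre.2]⟩
      nlinarith [abs_nonneg (Q+1/2+s.re), abs_nonneg ((d:ℝ)/2)]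
    have h5 : |v.im| ≤ |s.im| := by
      rw [hvim, abs_mul, abs_neg]
      nlinarith [abs_nonneg s.im, abs_nonneg ((d:ℝ)/2)]
    calc ‖v‖ = ‖v‖ := rfl
      _ ≤ |v.re| + |v.im| := h1
      _ ≤ _ := by linarith
  have hvKP : ‖v‖ + ((k+m:ℕ):ℝ) ≤ (4*(n:ℝ)+5) * P := by
    have hkm : ((k+m:ℕ):ℝ) = 2*(n:ℝ)+3 + (n:ℝ)*(d:ℝ) := by push_cast [hk, hm]; ring
    have hnd : (n:ℝ)*(d:ℝ) ≤ 2*(n:ℝ) := by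
      have h8 := mul_le_mul_of_nonneg_left hd2 (Nat.cast_nonneg (α := ℝ) n)
      linarith
    have h6 : (4*(n:ℝ)+3) ≤ (4*(n:ℝ)+3)*P :=
      le_mul_of_one_le_right (by positivity) hP1
    rw [hkm]
    linarith [hvnorm, hPre, hPim, hsre.1, h6, hnd]
  have hpow : (1+4*(n:ℝ))^k * (‖v‖ + ((k+m:ℕ):ℝ))^m ≤ (4*(n:ℝ)+5)^(4*n+3) * P^(m+2) := by
    have e1 : (1+4*(n:ℝ))^k ≤ (4*(n:ℝ)+5)^k :=
      pow_le_pow_left₀ (by positivity) (by linarith) k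
    have e2 : (‖v‖ + ((k+m:ℕ):ℝ))^m ≤ ((4*(n:ℝ)+5)*P)^m :=
      pow_le_pow_left₀ (by positivity) hvKP m
    have e4 : (4*(n:ℝ)+5)^m ≤ (4*(n:ℝ)+5)^(2*n) :=
      pow_le_pow_right₀ (by linarith) (by rw [hm]; rcases hd with rfl|rfl <;> omega)
    have e5 : P^m ≤ P^(m+2) := pow_le_pow_right₀ hP1 (by omega)
    have e6 : (4*(n:ℝ)+5)^(4*n+3) = (4*(n:ℝ)+5)^k * (4*(n:ℝ)+5)^(2*n) := by
      rw [← pow_add, hk]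
      congr 1
      omega
    calc (1+4*(n:ℝ))^k * (‖v‖ + ((k+m:ℕ):ℝ))^m
        ≤ (4*(n:ℝ)+5)^k * ((4*(n:ℝ)+5)^m * P^m) := by
          rw [← mul_pow]
          exact mul_le_mul e1 e2 (by positivity) (by positivity)
      _ ≤ (4*(n:ℝ)+5)^k * ((4*(n:ℝ)+5)^(2*n) * P^(m+2)) := by
          refine mul_le_mul_of_nonneg_left ?_ (by positivity)
          exact mul_le_mul e4 e5 (by positivity) (by positivity)
      _ = (4*(n:ℝ)+5)^(4*n+3) * P^(m+2) := by rw [e6]; ring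
  rw [hGbv]
  calc ‖Complex.Gamma w‖
      ≤ ‖Complex.Gamma v‖ * ((1+4*(n:ℝ))^k * (‖v‖ + ((k+m:ℕ):ℝ))^m) := hmain
    _ ≤ ‖Complex.Gamma v‖ * ((4*(n:ℝ)+5)^(4*n+3) * P^(m+2)) :=
        mul_le_mul_of_nonneg_left hpow (norm_nonneg _)
    _ = (4*(n:ℝ)+5)^(4*n+3) * P^(m+2) * ‖Complex.Gamma v‖ := by ring
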